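/- For the binary operation x ∘ y = −x − y (equivalently 2x + 2y) on ℤ/3ℤ, the associative spectrum satisfies s(n) = ⌊2^n/3⌋ for every n ≥ 2. (Paper's Proposition 5.3; this is the operation numbered 624 in the Siena Catalog of three-element groupoids.) -/

import Mathlib

/-- A bracketing of size `n`: a full binary tree with `n` leaves. -/
inductive Bracketing : ℕ → Type
  | leaf : Bracketing 1
  | node : {k l : ℕ} → Bracketing k → Bracketing l → Bracketing (k + l)

/-- The `n`-ary regular operation induced by a bracketing on a magma `(G, op)`. -/
def Bracketing.eval {G : Type*} (op : G → G → G) : {n : ℕ} → Bracketing n → (Fin n → G) → G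
  | _, .leaf, v => v 0
  | _, .node P Q, v =>
      op (Bracketing.eval op P (fun i => v (Fin.castAdd _ i)))
         (Bracketing.eval op Q (fun i => v (Fin.natAdd _ i)))

/-- The associative spectrum: the number of distinct `n`-ary regular operations. -/
noncomputable def assocSpectrum {G : Type*} (op : G → G → G) (n : ℕ) : ℕ :=
  Nat.card {f : (Fin n → G) → G // ∃ B : Bracketing n, f = Bracketing.eval op B}

/-- The depth of the `i`-th leaf of a bracketing. -/
def Bracketing.depth : {n : ℕ} → Bracketing n → Fin n → ℕ
  | _, .leaf, _ => 0
  | _, .node (k := k) P Q, i =>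
      if h : (i : ℕ) < k then Bracketing.depth P ⟨i, h⟩ + 1
      else Bracketing.depth Q ⟨(i : ℕ) - k, by have := i.isLt; omega⟩ + 1

/-- The right depth of the `i`-th leaf of a bracketing. -/
def Bracketing.rdepth : {n : ℕ} → Bracketing n → Fin n → ℕ
  | _, .leaf, _ => 0
  | _, .node (k := k) P Q, i =>
      if h : (i : ℕ) < k then Bracketing.rdepth P ⟨i, h⟩
      else Bracketing.rdepth Q ⟨(i : ℕ) - k, by have := i.isLt; omega⟩ + 1

/-- The left depth of the `i`-th leaf of a bracketing. -/
def Bracketing.ldepth : {n : ℕ} → Bracketing n → Fin n → ℕ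
  | _, .leaf, _ => 0
  | _, .node (k := k) P Q, i =>
      if h : (i : ℕ) < k then Bracketing.ldepth P ⟨i, h⟩ + 1
      else Bracketing.ldepth Q ⟨(i : ℕ) - k, by have := i.isLt; omega⟩

/-- A magma operation is Catalan if distinct bracketings of equal size
    induce distinct regular operations. -/
def IsCatalanOp {G : Type*} (op : G → G → G) : Prop :=
  ∀ (n : ℕ) (B₁ B₂ : Bracketing n), B₁ ≠ B₂ →
    Bracketing.eval op B₁ ≠ Bracketing.eval op B₂


/-- character: 0 ↦ 1, 1 ↦ -1 -/
def chr (x : ZMod 2) : ZMod 3 := if x = 0 then 1 else -1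

lemma chr_add_one (x : ZMod 2) : chr (x + 1) = - chr x := by revert x; decide

lemma chr_zero : chr 0 = 1 := rfl
lemma chr_inj : Function.Injective chr := by intro a b; revert a b; decide

lemma zmod2_add_one_add_one (x : ZMod 2) : x + 1 + 1 = x := by revert x; decide

lemma zmod2_ne_iff {x y : ZMod 2} : x ≠ y + 1 ↔ x = y := by revert x y; decide

/-- achievable parity lists -/
inductive Ach : List (ZMod 2) → Prop
  | leaf : Ach [0]
  | node {p q : List (ZMod 2)} : Ach p → Ach q → Ach ((p ++ q).map (· + 1))

def SumC (l : List (ZMod 2)) : ZMod 3 := (l.map chr).sum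

def HasPair (l : List (ZMod 2)) : Prop := ∃ a x b, l = a ++ x :: x :: b

lemma SumC_nil : SumC [] = 0 := rfl
lemma SumC_cons (x l) : SumC (x :: l) = chr x + SumC l := rfl
lemma SumC_append (a b) : SumC (a ++ b) = SumC a + SumC b := by
  simp [SumC]

lemma SumC_map_add_one (l) : SumC (l.map (· + 1)) = - SumC l := by
  induction l with
  | nil => simp [SumC]
  | cons x t ih => simp [SumC_cons, SumC] at *; rw [chr_add_one]; ring_nf; simp only [add_comm _ (1 : ZMod 2)] at ih; rw [ih]; ring

lemma Ach.length_pos {l} (h : Ach l) : 0 < l.length := by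
  induction h with
  | leaf => simp
  | node hp hq ihp ihq => simp; omega

lemma Ach.sum {l} (h : Ach l) : SumC l = 1 := by
  induction h with
  | leaf => decide
  | node hp hq ihp ihq =>
      rw [SumC_map_add_one, SumC_append, ihp, ihq]; decide

lemma Ach.eq_single {l} (h : Ach l) (hl : l.length = 1) : l = [0] := by
  cases h with
  | leaf => rfl
  | node hp hq =>
      exfalso
      have := hp.length_pos; have := hq.length_pos
      simp at hl; omega

lemma Ach.hasPair {l} (h : Ach l) (hl : 2 ≤ l.length) : HasPair l := by
  induction h with
  | leaf => simp at hl
  | node hp hq ihp ihq =>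
      rename_i p q
      rcases Nat.lt_or_ge p.length 2 with h1 | h1
      · have hp1 : p.length = 1 := by have := hp.length_pos; omega
        have hpe := hp.eq_single hp1
        rcases Nat.lt_or_ge q.length 2 with h2 | h2
        · have hq1 : q.length = 1 := by have := hq.length_pos; omega
          have hqe := hq.eq_single hq1
          subst hpe hqe
          exact ⟨[], 1, [], rfl⟩
        · obtain ⟨a, x, b, hdec⟩ := ihq h2
          subst hpe
          refine ⟨(([0] ++ a).map (· + 1)), x + 1, b.map (· + 1), ?_⟩
          rw [hdec]; simp
      · obtain ⟨a, x, b, hdec⟩ := ihp h1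
        refine ⟨a.map (· + 1), x + 1, (b ++ q).map (· + 1), ?_⟩
        rw [hdec]; simp


lemma map_invol (l : List (ZMod 2)) : (l.map (· + 1)).map (· + 1) = l := by
  induction l with
  | nil => simp
  | cons x t ih => simp [ih, zmod2_add_one_add_one]

/-- expansion: replace one element `y` by `y+1, y+1` -/
lemma Ach.expand {l} (h : Ach l) : ∀ a y b, l = a ++ y :: b →
    Ach (a ++ (y + 1) :: (y + 1) :: b) := by
  induction h with
  | leaf =>
      intro a y b he
      rcases a with _ | ⟨z, a⟩
      · simp at he; obtain ⟨h1, h2⟩ := he; subst h1 h2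
        simpa using Ach.node Ach.leaf Ach.leaf
      · simp at he
  | node hp hq ihp ihq =>
      rename_i p q
      intro a y b he
      have he' : p.map (· + 1) ++ q.map (· + 1) = a ++ y :: b := by
        rw [← List.map_append]; exact he
      rcases List.append_eq_append_iff.mp he' with ⟨a', ha, hb⟩ | ⟨c', hc, hd⟩
      · -- y inside q-part
        have hq2 : q = a'.map (· + 1) ++ (y + 1) :: b.map (· + 1) := by
          rw [← map_invol q, hb]; simp
        have hIH := ihq _ _ _ hq2
        simp only [zmod2_add_one_add_one] at hIH
        have h2 := Ach.node hp hIH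
        simpa only [List.map_append, List.map_cons, map_invol, ha,
          List.append_assoc] using h2
      · rcases c' with _ | ⟨z, c''⟩
        · -- boundary: q.map = y :: b
          simp only [List.nil_append] at hd
          have hq2 : q = ([] : List (ZMod 2)) ++ (y + 1) :: b.map (· + 1) := by
            rw [← map_invol q, ← hd]; simp
          have hIH := ihq _ _ _ hq2
          simp only [zmod2_add_one_add_one, List.nil_append] at hIH
          have h2 := Ach.node hp hIH
          simp only [List.append_nil] at hc
          simpa only [List.map_append, List.map_cons, map_invol, ← hc] using h2
        · -- y inside p-part
          have hzy : y = z ∧ b = c'' ++ q.map (· + 1) := by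
            constructor
            · exact (List.cons.injEq _ _ _ _ ▸ hd).1
            · have := (List.cons.injEq _ _ _ _ ▸ hd).2
              simpa using this
          obtain ⟨hzy1, hb2⟩ := hzy
          subst hzy1
          have hp2 : p = a.map (· + 1) ++ (y + 1) :: c''.map (· + 1) := by
            rw [← map_invol p, hc]; simp
          have hIH := ihp _ _ _ hp2
          simp only [zmod2_add_one_add_one] at hIH
          have h2 := Ach.node hIH hq
          rw [hb2]
          simpa only [List.map_append, List.map_cons, map_invol,
            List.append_assoc, List.cons_append] using h2


lemma chr_twice (x : ZMod 2) : chr x + chr x = - chr x := by revert x; decide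

lemma SumC_merge (u : List (ZMod 2)) (x : ZMod 2) (w : List (ZMod 2)) :
    SumC (u ++ (x + 1) :: w) = SumC (u ++ x :: x :: w) := by
  simp only [SumC_append, SumC_cons, chr_add_one]
  linear_combination (-1 : ZMod 3) * chr_twice x

lemma ach_base2 (l : List (ZMod 2)) (hl : l.length = 2) (hs : SumC l = 1) : Ach l := by
  rcases l with _ | ⟨x, _ | ⟨y, _ | _⟩⟩ <;> simp at hl
  have hxy : x = 1 ∧ y = 1 := by
    revert hs; simp only [SumC_cons, SumC_nil]; revert x y; decide
  obtain ⟨rfl, rfl⟩ := hxy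
  simpa using Ach.node Ach.leaf Ach.leaf

lemma noPair_adj {l : List (ZMod 2)} (h : ¬ HasPair l) {u s t w}
    (hd : l = u ++ s :: t :: w) : t = s + 1 := by
  by_contra hne
  exact h ⟨u, s, w, by rw [hd, zmod2_ne_iff.mp hne]⟩

/-- expand step in merged form -/
lemma ach_step {a : List (ZMod 2)} {x : ZMod 2} {b : List (ZMod 2)}
    (h : Ach (a ++ (x + 1) :: b)) : Ach (a ++ x :: x :: b) := by
  have := h.expand a (x + 1) b rfl
  simpa [zmod2_add_one_add_one] using this

theorem ach_of_sum_pair (n : ℕ) : ∀ l : List (ZMod 2), l.length = n → 2 ≤ n →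
    SumC l = 1 → HasPair l → Ach l := by
  induction n using Nat.strong_induction_on with
  | _ n IH =>
  intro l hlen hn hsum hpair
  obtain ⟨a, x, b, rfl⟩ := hpair
  have hlen2 : a.length + 2 + b.length = n := by simp at hlen; omega
  rcases Nat.lt_or_ge n 3 with h3 | h3
  · exact ach_base2 _ (by omega) hsum
  have hsum' : SumC (a ++ (x + 1) :: b) = 1 := by rw [SumC_merge]; exact hsum
  have hlen' : (a ++ (x + 1) :: b).length = n - 1 := by simp; omega
  rcases Nat.lt_or_ge n 4 with h4 | h4
  · exact ach_step (ach_base2 _ (by simp; omega) hsum')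
  by_cases hp' : HasPair (a ++ (x + 1) :: b)
  · exact ach_step (IH (n - 1) (by omega) _ hlen' (by omega) hsum' hp')
  rcases b with _ | ⟨t, b1⟩
  · -- b = []
    rcases List.eq_nil_or_concat a with rfl | ⟨a2, t', rfl⟩
    · simp at hlen2; omega
    have ht' : x + 1 = t' + 1 :=
      noPair_adj hp' (u := a2) (s := t') (t := x + 1) (w := []) (by simp)
    have ht'2 : t' = x := by
      have h2 := congrArg (· + 1) ht'
      simp only [zmod2_add_one_add_one] at h2; exact h2.symm
    simp only [ht'2] at hp' hsum hlen2 ⊢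
    rcases List.eq_nil_or_concat a2 with rfl | ⟨a3, s, rfl⟩
    · simp at hlen2; omega
    have hs : x = s + 1 :=
      noPair_adj hp' (u := a3) (s := s) (t := x) (w := [x + 1]) (by simp)
    have hsum2 : SumC ((a3 ++ [s]) ++ (x + 1) :: [x]) = 1 := by
      rw [SumC_merge]
      simp only [SumC_append, SumC_cons, SumC_nil, List.concat_eq_append] at hsum ⊢
      linear_combination hsum
    have hpair2 : HasPair ((a3 ++ [s]) ++ (x + 1) :: [x]) := by
      refine ⟨a3, s, [x], ?_⟩
      have hxs : x + 1 = s := by rw [hs, zmod2_add_one_add_one]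
      simp [hxs]
    have hlen3 : ((a3 ++ [s]) ++ (x + 1) :: [x]).length = n - 1 := by
      simp only [List.concat_eq_append, List.length_append, List.length_cons,
        List.length_nil] at hlen2 ⊢
      omega
    have hach := IH (n - 1) (by omega) _ hlen3 (by omega) hsum2 hpair2
    have hfin := ach_step hach
    -- hfin : Ach ((a3 ++ [s]) ++ x :: x :: [x]) ; goal : Ach ((a3.concat s).concat x ++ [x, x])
    have hle : (a3.concat s).concat x ++ x :: x :: ([] : List (ZMod 2))
        = (a3 ++ [s]) ++ x :: x :: [x] := by simp
    rw [hle]; exact hfin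
  · -- b = t :: b1
    have ht : t = x := by
      have h2 := noPair_adj hp' (u := a) (s := x + 1) (t := t) (w := b1) (by simp)
      rw [h2, zmod2_add_one_add_one]
    simp only [ht] at hp' hsum hlen2 hlen' hsum' ⊢
    have hsum2 : SumC ((a ++ [x]) ++ (x + 1) :: b1) = 1 := by
      rw [SumC_merge]
      simp only [SumC_append, SumC_cons, SumC_nil] at hsum ⊢
      linear_combination hsum
    have hlen3 : ((a ++ [x]) ++ (x + 1) :: b1).length = n - 1 := by
      simp only [List.length_append, List.length_cons, List.length_nil] at hlen2 ⊢
      omega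
    have hpair2 : HasPair ((a ++ [x]) ++ (x + 1) :: b1) := by
      rcases b1 with _ | ⟨s, b2⟩
      · rcases List.eq_nil_or_concat a with rfl | ⟨a2, t', rfl⟩
        · simp at hlen2; omega
        have ht' : x + 1 = t' + 1 :=
          noPair_adj hp' (u := a2) (s := t') (t := x + 1) (w := [x]) (by simp)
        have ht'2 : t' = x := by
          have h2 := congrArg (· + 1) ht'
          simp only [zmod2_add_one_add_one] at h2; exact h2.symm
        exact ⟨a2, x, [x + 1], by simp [ht'2]⟩
      · have hsx : s = x + 1 :=
          noPair_adj hp' (u := a ++ [x + 1]) (s := x) (t := s) (w := b2) (by simp)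
        subst hsx
        exact ⟨a ++ [x], x + 1, b2, by simp⟩
    have hach := IH (n - 1) (by omega) _ hlen3 (by omega) hsum2 hpair2
    have hfin := ach_step hach
    have hle : a ++ x :: x :: x :: b1 = (a ++ [x]) ++ x :: x :: b1 := by simp
    rw [hle]; exact hfin



/-! ## Bridge between bracketings and parity lists -/

/-- coefficient of leaf `i` for the operation `x ∘ y = -x - y` -/
def Bracketing.cf : {n : ℕ} → Bracketing n → Fin n → ZMod 3
  | _, .leaf, _ => 1
  | _, .node (k := k) P Q, i =>
      if h : (i : ℕ) < k then - Bracketing.cf P ⟨i, h⟩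
      else - Bracketing.cf Q ⟨(i : ℕ) - k, by have := i.isLt; omega⟩

lemma Bracketing.cf_castAdd {k l : ℕ} (P : Bracketing k) (Q : Bracketing l) (i : Fin k) :
    (P.node Q).cf (Fin.castAdd l i) = - P.cf i := by
  have h : ((Fin.castAdd l i : Fin (k + l)) : ℕ) < k := i.isLt
  rw [Bracketing.cf, dif_pos h]
  congr 1

lemma Bracketing.cf_natAdd {k l : ℕ} (P : Bracketing k) (Q : Bracketing l) (i : Fin l) :
    (P.node Q).cf (Fin.natAdd k i) = - Q.cf i := by
  have h : ¬ ((Fin.natAdd k i : Fin (k + l)) : ℕ) < k := by simp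
  rw [Bracketing.cf, dif_neg h]
  congr 1
  apply congrArg
  ext
  simp

/-- The evaluation formula for the operation `x ∘ y = -x - y` on `ZMod 3`. -/
lemma eval_formula : ∀ {n : ℕ} (B : Bracketing n) (v : Fin n → ZMod 3),
    Bracketing.eval (fun x y : ZMod 3 => -x - y) B v = ∑ i : Fin n, B.cf i * v i
  | _, .leaf, v => by
      simp [Bracketing.eval, Bracketing.cf]
  | _, .node P Q, v => by
      rw [Bracketing.eval, eval_formula P, eval_formula Q, Fin.sum_univ_add]
      simp only [Bracketing.cf_castAdd, Bracketing.cf_natAdd, neg_mul]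
      rw [Finset.sum_neg_distrib, Finset.sum_neg_distrib]
      ring

lemma Bracketing.cf_pm : ∀ {n : ℕ} (B : Bracketing n) (i : Fin n),
    B.cf i = 1 ∨ B.cf i = -1
  | _, .leaf, i => Or.inl rfl
  | _, .node (k := k) P Q, i => by
      rw [Bracketing.cf]
      split
      · rcases cf_pm P _ with h | h <;> rw [h] <;> [right; left] <;> simp
      · rcases cf_pm Q _ with h | h <;> rw [h] <;> [right; left] <;> simp

/-- inverse character -/
def chrInv (t : ZMod 3) : ZMod 2 := if t = 1 then 0 else 1

lemma chr_chrInv {t : ZMod 3} (h : t = 1 ∨ t = -1) : chr (chrInv t) = t := by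
  rcases h with rfl | rfl <;> decide

lemma chrInv_neg {t : ZMod 3} (h : t = 1 ∨ t = -1) : chrInv (-t) = chrInv t + 1 := by
  rcases h with rfl | rfl <;> decide

def Bracketing.pl {n : ℕ} (B : Bracketing n) : List (ZMod 2) :=
  List.ofFn (fun i => chrInv (B.cf i))

lemma Bracketing.length_pl {n : ℕ} (B : Bracketing n) : B.pl.length = n := by
  simp [Bracketing.pl]

lemma Bracketing.pl_node {k l : ℕ} (P : Bracketing k) (Q : Bracketing l) :
    (P.node Q).pl = ((P.pl ++ Q.pl).map (· + 1)) := by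
  unfold Bracketing.pl
  rw [List.ofFn_add]
  simp only [List.map_append, List.map_ofFn]
  congr 1
  · congr 1; funext i
    simp only [Function.comp]
    erw [Bracketing.cf_castAdd, chrInv_neg (P.cf_pm i)]
  · congr 1; funext i
    simp only [Function.comp]
    rw [Bracketing.cf_natAdd, chrInv_neg (Q.cf_pm i)]

lemma Bracketing.ach_pl : ∀ {n : ℕ} (B : Bracketing n), Ach B.pl
  | _, .leaf => by
      have : (Bracketing.leaf).pl = [0] := rfl
      rw [this]; exact Ach.leaf
  | _, .node P Q => by
      rw [Bracketing.pl_node]; exact Ach.node P.ach_pl Q.ach_pl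

lemma Bracketing.cf_eq_chr_pl {n : ℕ} (B : Bracketing n) (i : Fin n) :
    chr (B.pl[(i : ℕ)]'(by rw [B.length_pl]; exact i.isLt)) = B.cf i := by
  unfold Bracketing.pl
  rw [List.getElem_ofFn]
  exact chr_chrInv (B.cf_pm _)

lemma Bracketing.cast_pl {a b : ℕ} (e : a = b) (B : Bracketing a) :
    (e ▸ B : Bracketing b).pl = B.pl := by subst e; rfl

lemma exists_bracketing_of_ach {l : List (ZMod 2)} (h : Ach l) :
    ∃ B : Bracketing l.length, B.pl = l := by
  induction h with
  | leaf => exact ⟨.leaf, rfl⟩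
  | node hp hq ihp ihq =>
      rename_i p q
      obtain ⟨P, hP⟩ := ihp
      obtain ⟨Q, hQ⟩ := ihq
      have e : p.length + q.length = ((p ++ q).map (· + 1)).length := by simp
      refine ⟨e ▸ (P.node Q), ?_⟩
      rw [Bracketing.cast_pl, Bracketing.pl_node, hP, hQ]

open Finset

def cnt (n : ℕ) (t : ZMod 3) : ℕ :=
  (univ.filter fun v : Fin n → ZMod 2 => ∑ i, chr (v i) = t).card

lemma sum_zmod2 {M : Type*} [AddCommMonoid M] (g : ZMod 2 → M) :
    ∑ x : ZMod 2, g x = g 0 + g 1 := by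
  rw [show (univ : Finset (ZMod 2)) = {0, 1} from rfl]
  simp

lemma sum_zmod3 {M : Type*} [AddCommMonoid M] (g : ZMod 3 → M) :
    ∑ x : ZMod 3, g x = g 0 + g 1 + g 2 := by
  rw [show (univ : Finset (ZMod 3)) = {0, 1, 2} from rfl]
  rw [show ({0, 1, 2} : Finset (ZMod 3)) = insert 0 (insert 1 {2}) from rfl]
  rw [Finset.sum_insert (by decide), Finset.sum_insert (by decide), Finset.sum_singleton]
  exact (add_assoc _ _ _).symm

lemma cnt_succ (n : ℕ) (t : ZMod 3) : cnt (n + 1) t = cnt n (t - 1) + cnt n (t + 1) := by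
  classical
  unfold cnt
  rw [Finset.card_filter, Finset.card_filter, Finset.card_filter]
  rw [← Equiv.sum_comp (Fin.consEquiv (fun _ : Fin (n+1) => ZMod 2))
    (fun v => if ∑ i, chr (v i) = t then 1 else 0)]
  rw [Fintype.sum_prod_type]
  rw [sum_zmod2]
  have key : ∀ (x : ZMod 2) (w : Fin n → ZMod 2),
      ∑ i, chr ((Fin.consEquiv (fun _ : Fin (n+1) => ZMod 2)) (x, w) i)
        = chr x + ∑ i, chr (w i) := by
    intro x w
    rw [Fin.sum_univ_succ]
    simp [Fin.consEquiv]
  simp only [key]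
  congr 1
  · apply Finset.sum_congr rfl
    intro w _
    have : (chr 0 + ∑ i, chr (w i) = t) ↔ (∑ i, chr (w i) = t - 1) := by
      constructor <;> intro h
      · rw [show chr 0 = 1 from rfl] at h; linear_combination h
      · rw [show chr 0 = 1 from rfl]; linear_combination h
    simp only [this]
  · apply Finset.sum_congr rfl
    intro w _
    have : (chr 1 + ∑ i, chr (w i) = t) ↔ (∑ i, chr (w i) = t + 1) := by
      constructor <;> intro h
      · rw [show chr 1 = -1 from rfl] at h; linear_combination h
      · rw [show chr 1 = -1 from rfl]; linear_combination h
    simp only [this]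




lemma cnt_flip (n : ℕ) : cnt n 1 = cnt n 2 := by
  classical
  have memlem : ∀ (s t : ZMod 3), s = -t → ∀ v : Fin n → ZMod 2,
      v ∈ Finset.filter (fun v : Fin n → ZMod 2 => ∑ i, chr (v i) = t) Finset.univ →
      (fun i => v i + 1) ∈ Finset.filter (fun v : Fin n → ZMod 2 => ∑ i, chr (v i) = s)
        Finset.univ := by
    intro s t hst v hv
    rw [Finset.mem_filter] at hv ⊢
    refine ⟨Finset.mem_univ _, ?_⟩
    calc ∑ i, chr (v i + 1) = ∑ i, -chr (v i) := by simp only [chr_add_one]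
      _ = -∑ i, chr (v i) := by rw [Finset.sum_neg_distrib]
      _ = s := by rw [hv.2, hst]
  unfold cnt
  apply Finset.card_bij' (fun v _ => fun i => v i + 1) (fun v _ => fun i => v i + 1)
  · intro v _; funext i; exact zmod2_add_one_add_one _
  · intro v _; funext i; exact zmod2_add_one_add_one _
  · exact memlem 2 1 (by decide)
  · exact memlem 1 2 (by decide)

lemma cnt_total (n : ℕ) : cnt n 0 + cnt n 1 + cnt n 2 = 2 ^ n := by
  classical
  have h := Finset.card_eq_sum_card_fiberwise
    (s := (Finset.univ : Finset (Fin n → ZMod 2))) (t := (Finset.univ : Finset (ZMod 3)))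
    (f := fun v => ∑ i, chr (v i)) (fun x _ => Finset.mem_univ _)
  rw [sum_zmod3] at h
  have hcard : (Finset.univ : Finset (Fin n → ZMod 2)).card = 2 ^ n := by
    simp [Finset.card_univ]
  rw [hcard] at h
  exact (h ▸ rfl : cnt n 0 + cnt n 1 + cnt n 2 = 2 ^ n)


lemma cnt_one (n : ℕ) : (3 : ℤ) * cnt n 1 = 2 ^ n - (-1) ^ n := by
  induction n with
  | zero =>
      have h : cnt 0 1 = 0 := by decide
      rw [h]; norm_num
  | succ n ih =>
      have h1 : cnt (n + 1) 1 = cnt n 0 + cnt n 2 := by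
        have h := cnt_succ n 1
        rwa [show (1 : ZMod 3) - 1 = 0 by decide, show (1 : ZMod 3) + 1 = 2 by decide] at h
      have hM : (cnt n 0 : ℤ) + cnt n 1 + cnt n 2 = 2 ^ n := by
        exact_mod_cast congrArg (fun m : ℕ => (m : ℤ)) (cnt_total n)
      have hf : (cnt n 1 : ℤ) = cnt n 2 := by exact_mod_cast cnt_flip n
      have h2 : (cnt n 0 : ℤ) + cnt n 2 = 2 ^ n - cnt n 1 := by linarith
      rw [h1]
      push_cast
      rw [h2]
      linear_combination -ih

lemma zmod2_ne_iff' {x y : ZMod 2} : x ≠ y + 1 ↔ x = y := by revert x y; decide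
lemma zmod2_self_ne_add_one (x : ZMod 2) : x ≠ x + 1 := by revert x; decide

def PairV {n : ℕ} (v : Fin n → ZMod 2) : Prop :=
  ∃ i : Fin n, ∃ j : Fin n, (j : ℕ) = (i : ℕ) + 1 ∧ v i = v j

instance {n : ℕ} : DecidablePred (@PairV n) := fun v => by
  unfold PairV; infer_instance

lemma natCast_zmod2_even {m : ℕ} (h : Even m) : ((m : ℕ) : ZMod 2) = 0 := by
  obtain ⟨k, rfl⟩ := h
  push_cast
  have h2 : (2 : ZMod 2) = 0 := rfl
  calc (k : ZMod 2) + k = 2 * k := by ring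
    _ = 0 := by rw [h2, zero_mul]

lemma natCast_zmod2_odd {m : ℕ} (h : Odd m) : ((m : ℕ) : ZMod 2) = 1 := by
  obtain ⟨k, rfl⟩ := h
  push_cast
  have : ((2 * k : ℕ) : ZMod 2) = 0 := natCast_zmod2_even ⟨k, by ring⟩
  push_cast at this
  rw [this, zero_add]

lemma chr_sum_alt (c0 : ZMod 2) : ∀ n : ℕ,
    ∑ i : Fin n, chr (c0 + ((i : ℕ) : ZMod 2)) = if Odd n then chr c0 else 0
  | 0 => by simp
  | (n + 1) => by
      rw [Fin.sum_univ_castSucc]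
      simp only [Fin.coe_castSucc, Fin.val_last]
      rw [chr_sum_alt c0 n]
      rcases Nat.even_or_odd n with he | ho
      · rw [natCast_zmod2_even he, if_neg (by simp [Nat.not_odd_iff_even, he]),
          if_pos (by simp [Nat.odd_add_one, Nat.not_odd_iff_even, he]), add_zero, zero_add]
      · rw [natCast_zmod2_odd ho, if_pos ho,
          if_neg (by simp [Nat.odd_add_one, Nat.not_even_iff_odd, ho]), chr_add_one]
        ring

lemma noPair_struct {n : ℕ} (hn : 0 < n) (v : Fin n → ZMod 2) (h : ¬ PairV v) :
    ∀ m (hm : m < n), v ⟨m, hm⟩ = v ⟨0, hn⟩ + ((m : ℕ) : ZMod 2) := by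
  intro m
  induction m with
  | zero => intro hm; simp
  | succ m ihm =>
      intro hm
      have hm' : m < n := by omega
      have step : v ⟨m + 1, hm⟩ = v ⟨m, hm'⟩ + 1 := by
        by_contra hne
        exact h ⟨⟨m, hm'⟩, ⟨m + 1, hm⟩, by simp, (zmod2_ne_iff'.mp hne).symm⟩
      rw [step, ihm hm']
      push_cast
      ring

lemma sum_eq_alt {n : ℕ} (hn : 0 < n) (v : Fin n → ZMod 2) (h : ¬ PairV v) :
    ∑ i, chr (v i) = if Odd n then chr (v ⟨0, hn⟩) else 0 := by
  rw [← chr_sum_alt (v ⟨0, hn⟩) n]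
  apply Finset.sum_congr rfl
  intro i _
  congr 1
  have := noPair_struct hn v h (i : ℕ) i.isLt
  simpa using this

lemma card_sum1_nopair (n : ℕ) (hn : 1 ≤ n) :
    (Finset.univ.filter fun v : Fin n → ZMod 2 =>
        (∑ i, chr (v i) = 1) ∧ ¬ PairV v).card = if Odd n then 1 else 0 := by
  classical
  have hpos : 0 < n := hn
  by_cases hodd : Odd n
  · rw [if_pos hodd]
    rw [Finset.card_eq_one]
    refine ⟨fun i : Fin n => ((i : ℕ) : ZMod 2), ?_⟩
    ext v
    rw [Finset.mem_filter, Finset.mem_singleton]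
    constructor
    · rintro ⟨-, hsum, hnp⟩
      have hs2 := sum_eq_alt hpos v hnp
      rw [hsum, if_pos hodd] at hs2
      have hv0 : v ⟨0, hpos⟩ = 0 := by
        rcases (by decide : ∀ x : ZMod 2, x = 0 ∨ x = 1) (v ⟨0, hpos⟩) with h0 | h1
        · exact h0
        · rw [h1] at hs2; exact absurd hs2 (by decide)
      funext i
      have := noPair_struct hpos v hnp (i : ℕ) i.isLt
      rw [hv0, zero_add] at this
      simpa using this
    · rintro rfl
      refine ⟨Finset.mem_univ _, ?_, ?_⟩
      · have := chr_sum_alt 0 n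
        simp only [zero_add] at this
        rw [this, if_pos hodd]; rfl
      · rintro ⟨i, j, hji, heq⟩
        have heq' : ((i : ℕ) : ZMod 2) = ((j : ℕ) : ZMod 2) := heq
        rw [show ((j : ℕ) : ZMod 2) = ((i : ℕ) : ZMod 2) + 1 by
          rw [hji]; push_cast; ring] at heq'
        exact zmod2_self_ne_add_one _ heq'
  · rw [if_neg hodd, Finset.card_eq_zero]
    rw [Finset.eq_empty_iff_forall_notMem]
    intro v hv
    rw [Finset.mem_filter] at hv
    obtain ⟨-, hsum, hnp⟩ := hv
    have hs2 := sum_eq_alt hpos v hnp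
    rw [hsum, if_neg hodd] at hs2
    exact absurd hs2 (by decide)

lemma card_split (n : ℕ) :
    (Finset.univ.filter fun v : Fin n → ZMod 2 =>
        (∑ i, chr (v i) = 1) ∧ PairV v).card
      + (Finset.univ.filter fun v : Fin n → ZMod 2 =>
        (∑ i, chr (v i) = 1) ∧ ¬ PairV v).card = cnt n 1 := by
  classical
  unfold cnt
  rw [← Finset.filter_filter, ← Finset.filter_filter]
  exact Finset.card_filter_add_card_filter_not (p := fun v => PairV v)


/-! ## Translating `Ach` to vectors -/

lemma SumC_ofFn {n : ℕ} (v : Fin n → ZMod 2) : SumC (List.ofFn v) = ∑ i, chr (v i) := by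
  simp [SumC, List.map_ofFn, List.sum_ofFn]

lemma hasPair_of_pos : ∀ (l : List (ZMod 2)) (i : ℕ) (h : i + 1 < l.length),
    l[i]'(by omega) = l[i+1]'h → HasPair l := by
  intro l i
  induction i generalizing l with
  | zero =>
      intro h heq
      rcases l with _ | ⟨x, _ | ⟨y, t⟩⟩ <;> simp at h
      · simp at heq
        exact ⟨[], x, t, by simp [heq]⟩
  | succ i ih =>
      intro h heq
      rcases l with _ | ⟨x, t⟩
      · simp at h
      · simp only [List.getElem_cons_succ] at heq
        obtain ⟨a, z, b, hd⟩ := ih t (by simp at h; omega) heq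
        exact ⟨x :: a, z, b, by rw [hd]; rfl⟩

lemma pos_of_hasPair {l : List (ZMod 2)} (h : HasPair l) :
    ∃ (i : ℕ) (h : i + 1 < l.length), l[i]'(by omega) = l[i+1]'h := by
  obtain ⟨a, x, b, rfl⟩ := h
  refine ⟨a.length, by simp, ?_⟩
  rw [List.getElem_append_right (Nat.le_refl _), List.getElem_append_right (by omega)]
  simp

lemma hasPair_ofFn_iff {n : ℕ} (v : Fin n → ZMod 2) : HasPair (List.ofFn v) ↔ PairV v := by
  constructor
  · intro h
    obtain ⟨i, hlt, heq⟩ := pos_of_hasPair h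
    rw [List.length_ofFn] at hlt
    rw [List.getElem_ofFn, List.getElem_ofFn] at heq
    exact ⟨⟨i, by omega⟩, ⟨i + 1, by omega⟩, rfl, heq⟩
  · rintro ⟨i, j, hji, heq⟩
    apply hasPair_of_pos (List.ofFn v) (i : ℕ) (by simp; omega)
    rw [List.getElem_ofFn, List.getElem_ofFn]
    have hj : j = ⟨(i : ℕ) + 1, by omega⟩ := by ext; exact hji
    have hi : (⟨(i : ℕ), by omega⟩ : Fin n) = i := by ext; rfl
    rw [hi, ← hj]
    exact heq

lemma ach_ofFn_iff {n : ℕ} (hn : 2 ≤ n) (v : Fin n → ZMod 2) :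
    Ach (List.ofFn v) ↔ ((∑ i, chr (v i) = 1) ∧ PairV v) := by
  constructor
  · intro h
    refine ⟨by rw [← SumC_ofFn]; exact h.sum, (hasPair_ofFn_iff v).mp ?_⟩
    exact h.hasPair (by simp; omega)
  · rintro ⟨h1, h2⟩
    exact ach_of_sum_pair n _ (by simp) hn (by rw [SumC_ofFn]; exact h1)
      ((hasPair_ofFn_iff v).mpr h2)

/-! ## The spectrum as a count of parity lists -/

lemma eval_single {n : ℕ} (B : Bracketing n) (j : Fin n) :
    Bracketing.eval (fun x y : ZMod 3 => -x - y) B (Pi.single j 1) = B.cf j := by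
  rw [eval_formula]
  simp [Pi.single_apply]

lemma eval_eq_of_pl_eq {n : ℕ} {B B' : Bracketing n} (h : B.pl = B'.pl) :
    Bracketing.eval (fun x y : ZMod 3 => -x - y) B
      = Bracketing.eval (fun x y : ZMod 3 => -x - y) B' := by
  have hfn : (fun i => chrInv (B.cf i)) = fun i => chrInv (B'.cf i) :=
    List.ofFn_injective h
  have hcf : ∀ i, B.cf i = B'.cf i := by
    intro i
    rw [← chr_chrInv (B.cf_pm i), ← chr_chrInv (B'.cf_pm i), congrFun hfn i]
  funext v
  rw [eval_formula, eval_formula]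
  exact Finset.sum_congr rfl fun i _ => by rw [hcf]

lemma spectrum_card (n : ℕ) :
    assocSpectrum (fun x y : ZMod 3 => -x - y) n
      = Nat.card {l : List (ZMod 2) // l.length = n ∧ Ach l} := by
  unfold assocSpectrum
  have key : ∀ (f : (Fin n → ZMod 3) → ZMod 3) (B : Bracketing n),
      f = Bracketing.eval (fun x y : ZMod 3 => -x - y) B →
      List.ofFn (fun j => chrInv (f (Pi.single j 1))) = B.pl := by
    intro f B hB
    rw [hB]
    unfold Bracketing.pl
    congr 1
    funext j
    rw [eval_single]
  refine Nat.card_eq_of_bijective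
    (fun f => ⟨List.ofFn (fun j => chrInv (f.1 (Pi.single j 1))), by
      obtain ⟨B, hB⟩ := f.2
      rw [key f.1 B hB]
      exact ⟨B.length_pl, B.ach_pl⟩⟩) ⟨?_, ?_⟩
  · rintro ⟨f, ⟨B, hB⟩⟩ ⟨g, ⟨B', hB'⟩⟩ hfg
    have hlist : List.ofFn (fun j => chrInv (f (Pi.single j 1)))
        = List.ofFn (fun j => chrInv (g (Pi.single j 1))) := congrArg Subtype.val hfg
    rw [key f B hB, key g B' hB'] at hlist
    apply Subtype.ext
    show f = g
    rw [hB, hB']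
    exact eval_eq_of_pl_eq hlist
  · rintro ⟨l, hlen, hach⟩
    obtain ⟨B0, hB0⟩ := exists_bracketing_of_ach hach
    refine ⟨⟨Bracketing.eval (fun x y : ZMod 3 => -x - y) (hlen ▸ B0), hlen ▸ B0, rfl⟩, ?_⟩
    apply Subtype.ext
    show List.ofFn (fun j => chrInv
      (Bracketing.eval (fun x y : ZMod 3 => -x - y) (hlen ▸ B0) (Pi.single j 1))) = l
    rw [key _ (hlen ▸ B0) rfl, Bracketing.cast_pl, hB0]

lemma card_lists (n : ℕ) (hn : 2 ≤ n) :
    Nat.card {l : List (ZMod 2) // l.length = n ∧ Ach l}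
      = (Finset.univ.filter fun v : Fin n → ZMod 2 =>
          (∑ i, chr (v i) = 1) ∧ PairV v).card := by
  classical
  have hbij : Function.Bijective
      (fun v : {v : Fin n → ZMod 2 // (∑ i, chr (v i) = 1) ∧ PairV v} =>
        (⟨List.ofFn v.1, by simp, (ach_ofFn_iff hn v.1).mpr v.2⟩ :
          {l : List (ZMod 2) // l.length = n ∧ Ach l})) := by
    constructor
    · intro v w h
      exact Subtype.ext (List.ofFn_injective (congrArg Subtype.val h))
    · rintro ⟨l, hlen, hach⟩
      have hofn : List.ofFn (fun i : Fin n => l[(i : ℕ)]'(by rw [hlen]; exact i.isLt)) = l := by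
        apply List.ext_getElem (by simp [hlen])
        intro i h1 h2
        simp
      refine ⟨⟨fun i : Fin n => l[(i : ℕ)]'(by rw [hlen]; exact i.isLt),
        (ach_ofFn_iff hn _).mp (by rw [hofn]; exact hach)⟩, Subtype.ext hofn⟩
  rw [← Nat.card_eq_of_bijective _ hbij, Nat.card_eq_fintype_card, Fintype.card_subtype]

lemma key_even (a b c M : ℕ) (h1 : a + b = c) (h2 : b = 0)
    (h3 : (3 : ℤ) * (c : ℤ) = (M : ℤ) - 1) : a = M / 3 := by omega

lemma key_odd (a b c M : ℕ) (h1 : a + b = c) (h2 : b = 1)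
    (h3 : (3 : ℤ) * (c : ℤ) = (M : ℤ) + 1) : a = M / 3 := by omega

/-- Paper's Proposition 5.3: for `x ∘ y = -x - y` on `ℤ/3ℤ`, `s(n) = ⌊2^n/3⌋` for
`n ≥ 2`. -/
theorem stmt14 (n : ℕ) (hn : 2 ≤ n) :
    assocSpectrum (fun x y : ZMod 3 => -x - y) n = 2 ^ n / 3 := by
  classical
  rw [spectrum_card, card_lists n hn]
  have hsplit := card_split n
  have hnp := card_sum1_nopair n (le_trans one_le_two hn)
  have hone := cnt_one n
  rcases Nat.even_or_odd n with he | ho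
  · rw [if_neg (by simpa [Nat.not_odd_iff_even] using he)] at hnp
    have hcast : (3 : ℤ) * (cnt n 1 : ℤ) = ((2 ^ n : ℕ) : ℤ) - 1 := by
      rw [hone, Even.neg_one_pow he]; push_cast; ring
    exact key_even _ _ _ _ hsplit hnp hcast
  · rw [if_pos ho] at hnp
    have hcast : (3 : ℤ) * (cnt n 1 : ℤ) = ((2 ^ n : ℕ) : ℤ) + 1 := by
      rw [hone, Odd.neg_one_pow ho]; push_cast; ring
    exact key_odd _ _ _ _ hsplit hnp hcast
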